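/- arXiv:1401.6737 — 2 statements merged into one kernel-verified Lean document; each statement's English description precedes it below -/
import Mathlib

section
/- Assume (Ω, Γ, Σ₀) satisfies the flow-covering condition with time T > 0. Let v be continuously differentiable on an open neighborhood of closure(Ω) with v(y) = 0 for every y ∈ Γ. Then for every x ∈ Ω, |v(x)| ≤ T · sup_{y ∈ closure(Ω)} |⟨Σ₀(y), ∇v(y)⟩|. -/
open scoped RealInnerProductSpace

/-- The triple `(Ω, Γ, S₀)` satisfies the flow-covering condition with time `T`:
every point of `Ω` is reached, within time at most `T`, by a characteristic curve
of the vector field `S₀` issued from `Γ` and staying in `closure Ω`. -/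
def FlowCovering {n : ℕ} (Ω Γ : Set (EuclideanSpace ℝ (Fin n)))
    (S₀ : EuclideanSpace ℝ (Fin n) → EuclideanSpace ℝ (Fin n)) (T : ℝ) : Prop :=
  ∀ x ∈ Ω, ∃ s ∈ Set.Icc (0 : ℝ) T, ∃ γ : ℝ → EuclideanSpace ℝ (Fin n),
    (∀ r ∈ Set.Icc (0 : ℝ) s, γ r ∈ closure Ω) ∧ γ 0 ∈ Γ ∧ γ s = x ∧
    ∀ r ∈ Set.Icc (0 : ℝ) s, HasDerivAt γ (S₀ (γ r)) r

/-- Sup-norm form of the Poincaré–Friedrichs inequality along characteristics: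
under the flow-covering condition, a `C¹` function vanishing on `Γ` satisfies
`|v x| ≤ T · sup_{y ∈ closure Ω} |⟪S₀ y, ∇v y⟫|` for every `x ∈ Ω`. -/
theorem sup_poincare_friedrichs_along_characteristics
    (n : ℕ) (Ω Γ : Set (EuclideanSpace ℝ (Fin n)))
    (S₀ : EuclideanSpace ℝ (Fin n) → EuclideanSpace ℝ (Fin n))
    (L : NNReal) (T : ℝ)
    (hΩo : IsOpen Ω) (hΩb : Bornology.IsBounded Ω) (hΓ : Γ ⊆ frontier Ω)
    (hLip : LipschitzWith L S₀) (hT : 0 < T)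
    (hflow : FlowCovering Ω Γ S₀ T)
    (v : EuclideanSpace ℝ (Fin n) → ℝ) (U : Set (EuclideanSpace ℝ (Fin n)))
    (hU : IsOpen U) (hΩU : closure Ω ⊆ U) (hv : ContDiffOn ℝ 1 v U)
    (hv0 : ∀ y ∈ Γ, v y = 0) :
    ∀ x ∈ Ω, |v x| ≤ T * sSup ((fun y => |⟪S₀ y, gradient v y⟫|) '' closure Ω) := by
  intro x hx
  set g : EuclideanSpace ℝ (Fin n) → ℝ := fun y => |⟪S₀ y, gradient v y⟫| with hg
  set M := sSup (g '' closure Ω) with hM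
  obtain ⟨s, hs, γ, hγΩ, hγ0, hγs, hγd⟩ := hflow x hx
  have hcomp : IsCompact (closure Ω) :=
    Metric.isCompact_of_isClosed_isBounded isClosed_closure hΩb.closure
  have hgradcont : ContinuousOn (fun y => gradient v y) U := by
    have h1 : ContinuousOn (fderiv ℝ v) U := hv.continuousOn_fderiv_of_isOpen hU le_rfl
    have := ((InnerProductSpace.toDual ℝ (EuclideanSpace ℝ (Fin n))).symm.continuous.comp_continuousOn h1)
    exact this
  have hgcont : ContinuousOn g (closure Ω) := by
    apply ContinuousOn.abs
    exact ContinuousOn.inner (hLip.continuous.continuousOn) (hgradcont.mono hΩU)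
  have hbdd : BddAbove (g '' closure Ω) := hcomp.bddAbove_image hgcont
  have hMle : ∀ y ∈ closure Ω, g y ≤ M := fun y hy => le_csSup hbdd ⟨y, hy, rfl⟩
  have hM0 : 0 ≤ M := le_trans (abs_nonneg _) (hMle x (subset_closure hx))
  -- derivative of v ∘ γ
  have hderiv : ∀ r ∈ Set.Icc (0:ℝ) s,
      HasDerivWithinAt (v ∘ γ) (⟪S₀ (γ r), gradient v (γ r)⟫) (Set.Icc 0 s) r := by
    intro r hr
    have hmem : γ r ∈ U := hΩU (hγΩ r hr)
    have hdv : DifferentiableAt ℝ v (γ r) :=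
      (hv.differentiableOn one_ne_zero).differentiableAt (hU.mem_nhds hmem)
    have hF := hdv.hasGradientAt.hasFDerivAt
    have := hF.comp_hasDerivAt r (hγd r hr)
    have heq : (InnerProductSpace.toDual ℝ (EuclideanSpace ℝ (Fin n)))
        (gradient v (γ r)) (S₀ (γ r)) = ⟪S₀ (γ r), gradient v (γ r)⟫ := by
      rw [InnerProductSpace.toDual_apply_apply, real_inner_comm]
    rw [heq] at this
    exact this.hasDerivWithinAt
  have hbound : ∀ r ∈ Set.Icc (0:ℝ) s, ‖⟪S₀ (γ r), gradient v (γ r)⟫‖ ≤ M := by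
    intro r hr
    rw [Real.norm_eq_abs]
    exact hMle (γ r) (hγΩ r hr)
  have hkey := (convex_Icc (0:ℝ) s).norm_image_sub_le_of_norm_hasDerivWithin_le
    hderiv hbound ⟨le_rfl, hs.1⟩ ⟨hs.1, le_rfl⟩
  simp only [Function.comp, hγs, hv0 _ hγ0, sub_zero, Real.norm_eq_abs] at hkey
  calc |v x| ≤ M * |s| := hkey
    _ = M * s := by rw [abs_of_nonneg hs.1]
    _ ≤ M * T := by nlinarith [hs.2]
    _ = T * M := mul_comm _ _
end

section
/- Assume (Ω, Γ, Σ₀) satisfies the flow-covering condition with time T > 0, and let σ₀ be a continuous real-valued function on closure(Ω). If v is continuously differentiable on an open neighborhood of closure(Ω), vanishes at every point of Γ, and satisfies ⟨Σ₀(x), ∇v(x)⟩ + σ₀(x)·v(x) = 0 for every x ∈ closure(Ω), then v(x) = 0 for every x ∈ Ω. -/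
open scoped RealInnerProductSpace

/-- Injectivity of the transport operator `S₀·∇ + σ₀` with zero data on `Γ`
(Lemma 4.2): under the flow-covering condition, a `C¹` function vanishing on `Γ`
and satisfying `S₀·∇v + σ₀ v = 0` on `closure Ω` vanishes on `Ω`. -/
theorem transport_uniqueness
    (n : ℕ) (Ω Γ : Set (EuclideanSpace ℝ (Fin n)))
    (S₀ : EuclideanSpace ℝ (Fin n) → EuclideanSpace ℝ (Fin n))
    (L : NNReal) (T : ℝ)
    (hΩo : IsOpen Ω) (hΩb : Bornology.IsBounded Ω) (hΓ : Γ ⊆ frontier Ω)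
    (hLip : LipschitzWith L S₀) (hT : 0 < T)
    (hflow : FlowCovering Ω Γ S₀ T)
    (σ₀ : EuclideanSpace ℝ (Fin n) → ℝ)
    (hσ₀ : ContinuousOn σ₀ (closure Ω))
    (v : EuclideanSpace ℝ (Fin n) → ℝ) (U : Set (EuclideanSpace ℝ (Fin n)))
    (hU : IsOpen U) (hΩU : closure Ω ⊆ U) (hv : ContDiffOn ℝ 1 v U)
    (hv0 : ∀ y ∈ Γ, v y = 0)
    (hPDE : ∀ x ∈ closure Ω, ⟪S₀ x, gradient v x⟫ + σ₀ x * v x = 0) :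
    ∀ x ∈ Ω, v x = 0 := by
  intro x hx
  obtain ⟨s, hs, γ, hγΩ, hγ0, hγs, hγ'⟩ := hflow x hx
  -- bound on σ₀ on the compact closure of Ω
  have hcomp : IsCompact (closure Ω) :=
    Metric.isCompact_of_isClosed_isBounded isClosed_closure hΩb.closure
  obtain ⟨K, hK⟩ := hcomp.exists_bound_of_continuousOn hσ₀
  -- derivative of v ∘ γ
  have hdiff : ∀ r ∈ Set.Icc (0:ℝ) s,
      HasDerivAt (fun t => v (γ t)) (-(σ₀ (γ r) * v (γ r))) r := by
    intro r hr
    have hmem : γ r ∈ closure Ω := hγΩ r hr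
    have hdv : DifferentiableAt ℝ v (γ r) :=
      ((hv.differentiableOn one_ne_zero) (γ r) (hΩU hmem)).differentiableAt
        (hU.mem_nhds (hΩU hmem))
    have h1 : HasDerivAt (fun t => v (γ t)) (fderiv ℝ v (γ r) (S₀ (γ r))) r :=
      hdv.hasFDerivAt.comp_hasDerivAt r (hγ' r hr)
    have h2 : fderiv ℝ v (γ r) (S₀ (γ r)) = -(σ₀ (γ r) * v (γ r)) := by
      have := hPDE (γ r) hmem
      have hgr : ⟪gradient v (γ r), S₀ (γ r)⟫ = fderiv ℝ v (γ r) (S₀ (γ r)) :=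
        InnerProductSpace.toDual_symm_apply
      rw [real_inner_comm] at this
      linarith [hgr ▸ this]
    rwa [h2] at h1
  have hs0 : (0:ℝ) ≤ s := hs.1
  have hcont : ContinuousOn (fun t => v (γ t)) (Set.Icc 0 s) := fun r hr =>
    ((hdiff r hr).continuousAt).continuousWithinAt
  have hbound : ∀ r ∈ Set.Ico (0:ℝ) s,
      ‖-(σ₀ (γ r) * v (γ r))‖ ≤ K * ‖v (γ r)‖ + 0 := by
    intro r hr
    have hmem : γ r ∈ closure Ω := hγΩ r ⟨hr.1, hr.2.le⟩
    have := hK (γ r) hmem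
    rw [norm_neg, norm_mul, add_zero]
    exact mul_le_mul_of_nonneg_right ((Real.norm_eq_abs _).symm ▸ this) (norm_nonneg _)
  have h0 : ‖v (γ 0)‖ ≤ 0 := by
    rw [hv0 (γ 0) hγ0, norm_zero]
  have := norm_le_gronwallBound_of_norm_deriv_right_le hcont
    (fun r hr => (hdiff r ⟨hr.1, hr.2.le⟩).hasDerivWithinAt) h0 hbound s ⟨hs0, le_rfl⟩
  rw [gronwallBound_ε0, zero_mul] at this
  have : v (γ s) = 0 := norm_le_zero_iff.mp this
  rwa [hγs] at this
end
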